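/- (Entropy form of the Law of Requisite Variety.) Let X : Ω → D and U : Ω → R be random variables on a probability space (Ω, P) taking values in finite nonempty types D and R, and let g : D → R → O map into a finite type O with x ↦ g x u injective for every u : R. Then the output Y = (ω ↦ g (X ω) (U ω)) satisfies H(Y) ≥ H(X) − Real.log (Nat.card R): a regulator with only Nat.card R distinguishable responses can reduce the disturbance entropy by at most log (Nat.card R). -/
import Mathlib


open MeasureTheory

/-- Shannon entropy `H(X)` of a finitely-valued random variable `X` under `P`. -/
noncomputable def entropy {Ω S : Type*} [MeasurableSpace Ω] [Fintype S]
    (P : Measure Ω) (X : Ω → S) : ℝ :=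
  ∑ s : S, Real.negMulLog (P (X ⁻¹' {s})).toReal

/-- Conditional Shannon entropy `H(X | U)` via the chain rule
`H(X | U) = H(X, U) − H(U)`. -/
noncomputable def condEntropy {Ω S T : Type*} [MeasurableSpace Ω]
    [Fintype S] [Fintype T] (P : Measure Ω) (X : Ω → S) (U : Ω → T) : ℝ :=
  entropy P (fun ω => (X ω, U ω)) - entropy P U

/-- Mutual information `I(X : U) = H(X) + H(U) − H(X, U)`. -/
noncomputable def mutualInfo {Ω S T : Type*} [MeasurableSpace Ω]
    [Fintype S] [Fintype T] (P : Measure Ω) (X : Ω → S) (U : Ω → T) : ℝ :=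
  entropy P X + entropy P U - entropy P (fun ω => (X ω, U ω))

lemma negMulLog_sum_le' {ι : Type*} [Fintype ι] (f : ι → ℝ) (hf : ∀ i, 0 ≤ f i) :
    Real.negMulLog (∑ i, f i) ≤ ∑ i, Real.negMulLog (f i) := by
  have hS : Real.negMulLog (∑ i, f i) = ∑ i, (-(f i) * Real.log (∑ j, f j)) := by
    rw [Real.negMulLog, ← Finset.sum_mul, ← Finset.sum_neg_distrib]
  rw [hS]
  apply Finset.sum_le_sum
  intro i _
  rcases (hf i).eq_or_lt with h | h
  · simp [← h]
  · have hle : Real.log (f i) ≤ Real.log (∑ j, f j) :=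
      Real.log_le_log h (Finset.single_le_sum (fun j _ => hf j) (Finset.mem_univ i))
    rw [Real.negMulLog]
    nlinarith

lemma sum_negMulLog_le' {ι : Type*} [Fintype ι] [Nonempty ι] (p : ι → ℝ) (hp : ∀ i, 0 ≤ p i) :
    ∑ i, Real.negMulLog (p i) ≤
      Real.negMulLog (∑ i, p i) + (∑ i, p i) * Real.log (Fintype.card ι) := by
  set S := ∑ i, p i with hSdef
  rcases (Finset.sum_nonneg (fun i _ => hp i) : (0:ℝ) ≤ S).eq_or_lt with h0 | h0
  · have hS0 : S = 0 := h0.symm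
    have hz : ∀ i ∈ Finset.univ, p i = 0 :=
      (Finset.sum_eq_zero_iff_of_nonneg (fun i _ => hp i)).mp h0.symm
    have : ∀ i, p i = 0 := fun i => hz i (Finset.mem_univ i)
    simp [this, hS0]
  · set n : ℝ := (Fintype.card ι : ℝ) with hndef
    have hnpos : 0 < n := by
      have := Fintype.card_pos (α := ι)
      positivity
    have hj := Real.concaveOn_negMulLog.le_map_sum
      (t := Finset.univ) (w := fun _ : ι => n⁻¹) (p := p)
      (fun i _ => by positivity)
      (by
        rw [Finset.sum_const, Finset.card_univ, nsmul_eq_mul]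
        rw [← hndef]
        exact mul_inv_cancel₀ (ne_of_gt hnpos))
      (fun i _ => hp i)
    simp only [smul_eq_mul, ← Finset.mul_sum] at hj
    have hlog : Real.log (n⁻¹ * S) = Real.log S - Real.log n := by
      rw [Real.log_mul (by positivity) (ne_of_gt h0), Real.log_inv]; ring
    rw [Real.negMulLog, hlog] at hj
    rw [Real.negMulLog]
    have hcancel : n * n⁻¹ = 1 := mul_inv_cancel₀ (ne_of_gt hnpos)
    nlinarith [mul_le_mul_of_nonneg_left hj hnpos.le]

lemma entropy_comp_inj' {Ω S T : Type*} [MeasurableSpace Ω] [Fintype S] [Fintype T]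
    (P : Measure Ω) (Z : Ω → S) (φ : S → T) (hφ : Function.Injective φ) :
    entropy P (fun ω => φ (Z ω)) = entropy P Z := by
  classical
  unfold entropy
  calc ∑ t : T, Real.negMulLog (P ((fun ω => φ (Z ω)) ⁻¹' {t})).toReal
      = ∑ t ∈ Finset.univ.image φ,
          Real.negMulLog (P ((fun ω => φ (Z ω)) ⁻¹' {t})).toReal := by
        refine (Finset.sum_subset (Finset.subset_univ _) ?_).symm
        intro t _ ht
        have : (fun ω => φ (Z ω)) ⁻¹' {t} = ∅ := by
          ext ω
          simp only [Set.mem_preimage, Set.mem_singleton_iff, Set.mem_empty_iff_false, iff_false]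
          intro h
          exact ht (Finset.mem_image.mpr ⟨Z ω, Finset.mem_univ _, h⟩)
        simp [this]
    _ = ∑ s : S, Real.negMulLog (P ((fun ω => φ (Z ω)) ⁻¹' {φ s})).toReal :=
        Finset.sum_image (fun a _ b _ h => hφ h)
    _ = ∑ s : S, Real.negMulLog (P (Z ⁻¹' {s})).toReal := by
        apply Finset.sum_congr rfl
        intro s _
        have : (fun ω => φ (Z ω)) ⁻¹' {φ s} = Z ⁻¹' {s} := by
          ext ω; simp [hφ.eq_iff]
        rw [this]

lemma measure_fst_fiber' {Ω S T : Type*} [MeasurableSpace Ω] [Fintype S] [Fintype T]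
    (P : Measure Ω) (Z : Ω → S × T) (hZ : ∀ p : S × T, MeasurableSet (Z ⁻¹' {p})) (s : S) :
    P ((fun ω => (Z ω).1) ⁻¹' {s}) = ∑ t : T, P (Z ⁻¹' {(s, t)}) := by
  have h := sum_measure_preimage_singleton (μ := P) (f := Z)
    (s := ({s} : Finset S) ×ˢ (Finset.univ : Finset T)) (fun p _ => hZ p)
  rw [Finset.sum_product, Finset.sum_singleton] at h
  rw [h]
  congr 1
  ext ω
  simp only [Finset.coe_product, Finset.coe_singleton, Finset.coe_univ,
    Set.singleton_prod, Set.mem_preimage, Set.mem_singleton_iff, Set.image_univ, Set.mem_range]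
  exact ⟨fun h => ⟨(Z ω).2, by rw [← h]⟩, fun ⟨y, hy⟩ => by rw [← hy]⟩

/-- Entropy form of the Law of Requisite Variety: a regulator with
`Nat.card R` distinguishable responses can reduce the disturbance entropy by
at most `log (Nat.card R)`: `H(Y) ≥ H(X) − log (Nat.card R)`. -/
theorem entropy_output_ge_entropy_sub_log_card
    {Ω D R O : Type*} [MeasurableSpace Ω]
    [Fintype D] [Nonempty D] [MeasurableSpace D] [MeasurableSingletonClass D]
    [Fintype R] [Nonempty R] [MeasurableSpace R] [MeasurableSingletonClass R]
    [Fintype O]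
    (P : Measure Ω) [IsProbabilityMeasure P]
    (X : Ω → D) (U : Ω → R) (hX : Measurable X) (hU : Measurable U)
    (g : D → R → O) (hg : ∀ u : R, Function.Injective (fun x => g x u)) :
    entropy P (fun ω => g (X ω) (U ω)) ≥
      entropy P X - Real.log (Nat.card R) := by
  classical
  set Y : Ω → O := fun ω => g (X ω) (U ω) with hYdef
  set XU : Ω → D × R := fun ω => (X ω, U ω) with hXUdef
  have hXU : Measurable XU := hX.prodMk hU
  have hfibXU : ∀ p : D × R, MeasurableSet (XU ⁻¹' {p}) :=
    fun p => hXU (measurableSet_singleton p)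
  set φ : D × R → O × R := fun p => (g p.1 p.2, p.2) with hφdef
  have hφ : Function.Injective φ := by
    rintro ⟨x, u⟩ ⟨x', u'⟩ h
    simp only [hφdef, Prod.mk.injEq] at h
    obtain ⟨h1, h2⟩ := h
    subst h2
    exact Prod.ext (hg u h1) rfl
  set YU : Ω → O × R := fun ω => φ (XU ω) with hYUdef
  have hfibYU : ∀ q : O × R, MeasurableSet (YU ⁻¹' {q}) := by
    intro q
    have : YU ⁻¹' {q} = XU ⁻¹' (φ ⁻¹' {q}) := rfl
    rw [this]
    exact hXU (Set.toFinite _).measurableSet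
  have hfibY : ∀ o : O, MeasurableSet (Y ⁻¹' {o}) := by
    intro o
    have : Y ⁻¹' {o} = XU ⁻¹' ((fun p : D × R => g p.1 p.2) ⁻¹' {o}) := rfl
    rw [this]
    exact hXU (Set.toFinite _).measurableSet
  -- Step 1: H(X) ≤ H(X, U)
  have step1 : entropy P X ≤ entropy P XU := by
    unfold entropy
    rw [Fintype.sum_prod_type]
    apply Finset.sum_le_sum
    intro s _
    have hdecomp : P (X ⁻¹' {s}) = ∑ t : R, P (XU ⁻¹' {(s, t)}) :=
      measure_fst_fiber' P XU hfibXU s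
    have htr : (P (X ⁻¹' {s})).toReal = ∑ t : R, (P (XU ⁻¹' {(s, t)})).toReal := by
      rw [hdecomp, ENNReal.toReal_sum (fun t _ => measure_ne_top P _)]
    rw [htr]
    exact negMulLog_sum_le' _ (fun t => ENNReal.toReal_nonneg)
  -- Step 2: H(X, U) = H(Y, U)
  have step2 : entropy P XU = entropy P YU := by
    rw [hYUdef]
    exact (entropy_comp_inj' P XU φ hφ).symm
  -- Step 3: H(Y, U) ≤ H(Y) + log |R|
  have hsum1 : ∑ o : O, (P (Y ⁻¹' {o})).toReal = 1 := by
    have h := sum_measure_preimage_singleton (μ := P) (f := Y)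
      (s := (Finset.univ : Finset O)) (fun o _ => hfibY o)
    rw [← ENNReal.toReal_sum (fun o _ => measure_ne_top P _)] at *
    rw [h]
    simp
  have step3 : entropy P YU ≤ entropy P Y + Real.log (Fintype.card R) := by
    unfold entropy
    rw [Fintype.sum_prod_type]
    have hbound : ∀ o : O,
        ∑ u : R, Real.negMulLog (P (YU ⁻¹' {(o, u)})).toReal ≤
          Real.negMulLog (P (Y ⁻¹' {o})).toReal +
            (P (Y ⁻¹' {o})).toReal * Real.log (Fintype.card R) := by
      intro o
      have hdecomp : P (Y ⁻¹' {o}) = ∑ u : R, P (YU ⁻¹' {(o, u)}) :=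
        measure_fst_fiber' P YU hfibYU o
      have htr : (P (Y ⁻¹' {o})).toReal = ∑ u : R, (P (YU ⁻¹' {(o, u)})).toReal := by
        rw [hdecomp, ENNReal.toReal_sum (fun t _ => measure_ne_top P _)]
      rw [htr]
      exact sum_negMulLog_le' _ (fun u => ENNReal.toReal_nonneg)
    calc ∑ o : O, ∑ u : R, Real.negMulLog (P (YU ⁻¹' {(o, u)})).toReal
        ≤ ∑ o : O, (Real.negMulLog (P (Y ⁻¹' {o})).toReal +
            (P (Y ⁻¹' {o})).toReal * Real.log (Fintype.card R)) :=
          Finset.sum_le_sum (fun o _ => hbound o)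
      _ = (∑ o : O, Real.negMulLog (P (Y ⁻¹' {o})).toReal) +
            (∑ o : O, (P (Y ⁻¹' {o})).toReal) * Real.log (Fintype.card R) := by
          rw [Finset.sum_add_distrib, Finset.sum_mul]
      _ = entropy P Y + Real.log (Fintype.card R) := by
          rw [hsum1, entropy]; ring
  have hcard : Real.log (Nat.card R) = Real.log (Fintype.card R) := by
    rw [Nat.card_eq_fintype_card]
  rw [ge_iff_le, hcard]
  linarith
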